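/- Let d(u,v) = min(|u−v|, 1−|u−v|) denote the periodic distance on [0,1]. For every r with 0 ≤ r ≤ 1/4 and every x ∈ [0,1], the integral over (y,z) ∈ [0,1]² (with respect to two-dimensional Lebesgue measure) of the product of indicators 1[d(x,y) ≤ r]·1[d(x,z) ≤ r]·1[d(y,z) ≤ r] equals 3r². (This is the conditional probability, given one vertex location, that three i.i.d. uniform points on the circle of circumference 1 pairwise lie within distance r, i.e. the within-community triangle probability in the geometric block model.) -/

import Mathlib

open MeasureTheory

noncomputable section

/-- The periodic distance on `[0,1]`: `d(u,v) = min(|u-v|, 1-|u-v|)`. -/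
def pdist (u v : ℝ) : ℝ := min |u - v| (1 - |u - v|)

def gp (w : ℝ) : ℝ := min (Int.fract w) (1 - Int.fract w)

lemma gp_neg (w : ℝ) : gp (-w) = gp w := by
  unfold gp
  by_cases h : Int.fract w = 0
  · rw [Int.fract_neg_eq_zero.2 h, h]
  · rw [Int.fract_neg h]; rw [min_comm]; ring_nf

lemma gp_eq {w : ℝ} (h : |w| ≤ 1) : gp w = min |w| (1 - |w|) := by
  rcases abs_le.1 h with ⟨h1, h2⟩
  have key : ∀ v : ℝ, 0 ≤ v → v ≤ 1 → gp v = min |v| (1 - |v|) := by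
    intro v hv0 hv1
    rcases eq_or_lt_of_le hv1 with rfl | hv
    · unfold gp; rw [Int.fract_one]; simp
    · unfold gp; rw [Int.fract_eq_self.2 ⟨hv0, hv⟩, abs_of_nonneg hv0]
  rcases le_or_gt 0 w with hw | hw
  · exact key w hw h2
  · rw [← gp_neg, key (-w) (by linarith) (by linarith), abs_neg]

lemma gp_add_one (w : ℝ) : gp (w + 1) = gp w := by
  unfold gp; rw [Int.fract_add_one]

lemma gp_periodic : Function.Periodic gp 1 := gp_add_one

lemma gp_sub_one (w : ℝ) : gp (w - 1) = gp w := by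
  rw [← gp_add_one (w - 1)]; ring_nf

lemma measurable_gp : Measurable gp :=
  (measurable_fract).min (measurable_const.sub measurable_fract)

lemma pdist_eq {u v : ℝ} (h : |u - v| ≤ 1) : pdist u v = gp (u - v) :=
  (gp_eq h).symm

lemma gp_le_iff {w r : ℝ} (h : |w| ≤ 1) : gp w ≤ r ↔ |w| ≤ r ∨ 1 - r ≤ |w| := by
  rw [gp_eq h, min_le_iff]
  constructor
  · rintro (h1 | h1); exacts [Or.inl h1, Or.inr (by linarith)]
  · rintro (h1 | h1); exacts [Or.inl h1, Or.inr (by linarith)]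

lemma meas_ind {r : ℝ} {f : ℝ → ℝ} (hf : Measurable f) :
    Measurable (fun w => if f w ≤ r then (1:ℝ) else 0) :=
  Measurable.ite (measurableSet_le hf measurable_const) measurable_const measurable_const

lemma intervalIntegrable_of_bounded {f : ℝ → ℝ} (hm : Measurable f) {C : ℝ}
    (h : ∀ w, ‖f w‖ ≤ C) (a b : ℝ) : IntervalIntegrable f volume a b := by
  rw [intervalIntegrable_iff]
  have hc : IntegrableOn (fun _ : ℝ => C) (Set.uIoc a b) volume :=
    integrableOn_const measure_Ioc_lt_top.ne
  exact hc.mono' hm.aestronglyMeasurable.restrict (ae_of_all _ h)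

def Jr (r s : ℝ) : ℝ :=
  ∫ w in (0:ℝ)..1, (if gp w ≤ r then (1:ℝ) else 0) * (if gp (w - s) ≤ r then (1:ℝ) else 0)

lemma J_per (r s : ℝ) : Jr r (s + 1) = Jr r s := by
  unfold Jr
  simp only [show ∀ w : ℝ, w - (s + 1) = (w - s) - 1 from fun w => by ring, gp_sub_one]

lemma J_neg (r s : ℝ) : Jr r (-s) = Jr r s := by
  unfold Jr
  have h := intervalIntegral.integral_comp_sub_left (a := (0:ℝ)) (b := 1)
      (fun w => (if gp w ≤ r then (1:ℝ) else 0) * (if gp (w - s) ≤ r then (1:ℝ) else 0)) 1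
  simp only [sub_zero, sub_self] at h
  rw [← h]
  apply intervalIntegral.integral_congr
  intro w _
  have e1 : gp (1 - w) = gp w := by
    rw [show (1:ℝ) - w = -(w - 1) by ring, gp_neg, gp_sub_one]
  have e2 : gp (1 - w - s) = gp (w - -s) := by
    rw [show (1:ℝ) - w - s = -((w - -s) - 1) by ring, gp_neg, gp_sub_one]
  simp only [e1, e2]

lemma J_abs (r d : ℝ) : Jr r d = Jr r |d| := by
  rcases abs_cases d with ⟨h, _⟩ | ⟨h, _⟩
  · rw [h]
  · rw [h, J_neg]

lemma J_gp (r : ℝ) {d : ℝ} (hd : |d| ≤ 1) : Jr r d = Jr r (gp d) := by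
  rw [gp_eq hd]
  rcases le_total |d| (1 - |d|) with h | h
  · rw [min_eq_left h, J_abs]
  · rw [min_eq_right h, J_abs]
    conv_lhs => rw [show |d| = (|d| - 1) + 1 by ring]
    rw [J_per, show |d| - 1 = -(1 - |d|) by ring, J_neg]

lemma shift_eq (x : ℝ) (f : ℝ → ℝ) (hper : Function.Periodic f 1) :
    ∫ z in Set.Icc (0:ℝ) 1, f z = ∫ w in (0:ℝ)..1, f (x + w) := by
  rw [MeasureTheory.integral_Icc_eq_integral_Ioc,
    ← intervalIntegral.integral_of_le (by norm_num : (0:ℝ) ≤ 1),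
    show (1:ℝ) = 0 + 1 by ring, hper.intervalIntegral_add_eq 0 x,
    intervalIntegral.integral_comp_add_left f x]
  norm_num

lemma gp_nonneg (w : ℝ) : 0 ≤ gp w :=
  le_min (Int.fract_nonneg w) (by linarith [Int.fract_lt_one w])

lemma gp_of_Icc {w : ℝ} (h0 : 0 ≤ w) (h1 : w ≤ 1) : gp w = min w (1 - w) := by
  rw [gp_eq (by rwa [abs_of_nonneg h0]), abs_of_nonneg h0]

lemma ae_ne_pt (c : ℝ) : ∀ᵐ w : ℝ ∂volume, w ≠ c := by
  refine MeasureTheory.ae_iff.2 ?_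
  simpa using measure_singleton (α := ℝ) c

lemma J_core {r s : ℝ} (hs0 : 0 ≤ s) (hsr : s ≤ r) (hr : r ≤ 1/4) : Jr r s = 2*r - s := by
  have hr0 : 0 ≤ r := le_trans hs0 hsr
  set f : ℝ → ℝ :=
    fun w => (if gp w ≤ r then (1:ℝ) else 0) * (if gp (w - s) ≤ r then (1:ℝ) else 0) with hf
  have hm : Measurable f :=
    (meas_ind measurable_gp).mul (meas_ind (measurable_gp.comp (measurable_id.sub measurable_const)))
  have hb : ∀ w, ‖f w‖ ≤ 1 := by
    intro w; rw [hf]; simp only [Real.norm_eq_abs]; split_ifs <;> norm_num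
  have hint : ∀ a b : ℝ, IntervalIntegrable f volume a b :=
    intervalIntegrable_of_bounded hm hb
  have h1 : ∫ w in (0:ℝ)..r, f w = r := by
    rw [intervalIntegral.integral_congr (g := fun _ => (1:ℝ)) ?_]
    · simp
    · intro w hw
      rw [Set.uIcc_of_le hr0] at hw
      obtain ⟨hw0, hw1⟩ := hw
      have e1 : gp w ≤ r := by
        rw [gp_of_Icc hw0 (by linarith)]
        exact le_trans (min_le_left _ _) hw1
      have e2 : gp (w - s) ≤ r := by
        rw [gp_le_iff (by rw [abs_le]; constructor <;> linarith)]
        exact Or.inl (by rw [abs_le]; constructor <;> linarith)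
      simp [f, e1, e2]
  have h3 : ∫ w in (1 - r + s : ℝ)..1, f w = r - s := by
    rw [intervalIntegral.integral_congr (g := fun _ => (1:ℝ)) ?_]
    · simp; ring
    · intro w hw
      rw [Set.uIcc_of_le (by linarith)] at hw
      obtain ⟨hw0, hw1⟩ := hw
      have e1 : gp w ≤ r := by
        rw [gp_of_Icc (by linarith) hw1]
        exact le_trans (min_le_right _ _) (by linarith)
      have e2 : gp (w - s) ≤ r := by
        rw [gp_le_iff (by rw [abs_le]; constructor <;> linarith)]
        right
        rw [abs_of_nonneg (by linarith)]; linarith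
      simp [f, e1, e2]
  have h2 : ∫ w in (r:ℝ)..(1 - r + s), f w = 0 := by
    rw [intervalIntegral.integral_congr_ae (g := fun _ => (0:ℝ)) ?_]
    · simp
    · filter_upwards [ae_ne_pt (1 - r + s)] with w hne hw
      rw [Set.uIoc_of_le (by linarith)] at hw
      obtain ⟨hw0, hw1⟩ := hw
      have hw1' : w < 1 - r + s := lt_of_le_of_ne hw1 hne
      by_cases e1 : gp w ≤ r
      · have hwx : 1 - r ≤ w := by
          rw [gp_of_Icc (by linarith) (by linarith), min_le_iff] at e1
          rcases e1 with h | h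
          · linarith
          · linarith
        have e2 : ¬ gp (w - s) ≤ r := by
          rw [gp_le_iff (by rw [abs_le]; constructor <;> linarith),
            abs_of_nonneg (by linarith)]
          push_neg
          constructor <;> linarith
        simp [f, e2]
      · simp [f, e1]
  have hsplit : Jr r s = (∫ w in (0:ℝ)..r, f w) + (∫ w in (r:ℝ)..(1 - r + s), f w)
      + (∫ w in (1 - r + s : ℝ)..1, f w) := by
    rw [intervalIntegral.integral_add_adjacent_intervals (hint 0 r) (hint r (1 - r + s)),
      intervalIntegral.integral_add_adjacent_intervals (hint 0 (1 - r + s)) (hint (1 - r + s) 1)]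
    rfl
  rw [hsplit, h1, h2, h3]; ring

lemma K_core {r : ℝ} (hr0 : 0 ≤ r) (hr : r ≤ 1/4) :
    (∫ w in (0:ℝ)..1, (if gp w ≤ r then (1:ℝ) else 0) * (2*r - gp w)) = 3 * r^2 := by
  set f : ℝ → ℝ := fun w => (if gp w ≤ r then (1:ℝ) else 0) * (2*r - gp w) with hf
  have hm : Measurable f :=
    (meas_ind measurable_gp).mul (measurable_const.sub measurable_gp)
  have hb : ∀ w, ‖f w‖ ≤ 1 := by
    intro w; rw [hf]; simp only [Real.norm_eq_abs]
    split_ifs with h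
    · rw [one_mul, abs_of_nonneg (by linarith [gp_nonneg w])]
      linarith [gp_nonneg w]
    · simp
  have hint : ∀ a b : ℝ, IntervalIntegrable f volume a b :=
    intervalIntegrable_of_bounded hm hb
  have h1 : ∫ w in (0:ℝ)..r, f w = 2*r*r - r^2/2 := by
    rw [intervalIntegral.integral_congr (g := fun w => 2*r - w) ?_]
    · rw [intervalIntegral.integral_sub intervalIntegrable_const intervalIntegral.intervalIntegrable_id,
        intervalIntegral.integral_const, integral_id]
      simp; ring
    · intro w hw
      rw [Set.uIcc_of_le hr0] at hw
      obtain ⟨hw0, hw1⟩ := hw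
      have e0 : gp w = w := by
        rw [gp_of_Icc hw0 (by linarith)]; exact min_eq_left (by linarith)
      simp [f, e0, hw1]
  have h3 : ∫ w in (1 - r : ℝ)..1, f w = (2*r - 1)*r + (1 - (1-r)^2)/2 := by
    rw [intervalIntegral.integral_congr (g := fun w => (2*r - 1) + w) ?_]
    · rw [intervalIntegral.integral_add intervalIntegrable_const intervalIntegral.intervalIntegrable_id,
        intervalIntegral.integral_const, integral_id]
      simp; ring
    · intro w hw
      rw [Set.uIcc_of_le (by linarith)] at hw
      obtain ⟨hw0, hw1⟩ := hw
      have e0 : gp w = 1 - w := by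
        rw [gp_of_Icc (by linarith) hw1]; exact min_eq_right (by linarith)
      have e1 : gp w ≤ r := by rw [e0]; linarith
      simp only [f]
      rw [e0, if_pos (show 1 - w ≤ r by linarith)]
      ring
  have h2 : ∫ w in (r:ℝ)..(1 - r), f w = 0 := by
    rw [intervalIntegral.integral_congr_ae (g := fun _ => (0:ℝ)) ?_]
    · simp
    · filter_upwards [ae_ne_pt (1 - r)] with w hne hw
      rw [Set.uIoc_of_le (by linarith)] at hw
      obtain ⟨hw0, hw1⟩ := hw
      have hw1' : w < 1 - r := lt_of_le_of_ne hw1 hne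
      have e1 : ¬ gp w ≤ r := by
        rw [gp_of_Icc (by linarith) (by linarith), min_le_iff]
        push_neg
        constructor <;> linarith
      simp [f, e1]
  have hsplit : (∫ w in (0:ℝ)..1, f w) = (∫ w in (0:ℝ)..r, f w)
      + (∫ w in (r:ℝ)..(1 - r), f w) + (∫ w in (1 - r : ℝ)..1, f w) := by
    rw [intervalIntegral.integral_add_adjacent_intervals (hint 0 r) (hint r (1 - r)),
      intervalIntegral.integral_add_adjacent_intervals (hint 0 (1 - r)) (hint (1 - r) 1)]
  rw [hsplit, h1, h2, h3]; ring

lemma pdist_nonneg {u v : ℝ} (h : |u - v| ≤ 1) : 0 ≤ pdist u v :=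
  le_min (abs_nonneg _) (by linarith)

lemma pdist_gp {u v : ℝ} (h : |u - v| ≤ 1) : pdist u v = gp (v - u) := by
  rw [pdist_eq h, show u - v = -(v - u) by ring, gp_neg]

lemma outer_int {r x : ℝ} (hr0 : 0 ≤ r) (hr : r ≤ 1/4) (hx0 : 0 ≤ x) (hx1 : x ≤ 1) :
    ∫ y in Set.Icc (0:ℝ) 1,
      (if pdist x y ≤ r then (1:ℝ) else 0) * (2*r - pdist x y) = 3 * r^2 := by
  set F : ℝ → ℝ := fun y => (if gp (y - x) ≤ r then (1:ℝ) else 0) * (2*r - gp (y - x)) with hF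
  have hper : Function.Periodic F 1 := by
    intro y
    simp only [hF, show y + 1 - x = (y - x) + 1 by ring, gp_add_one]
  have hcongr : ∀ y ∈ Set.Icc (0:ℝ) 1,
      (if pdist x y ≤ r then (1:ℝ) else 0) * (2*r - pdist x y) = F y := by
    intro y hy
    obtain ⟨hy0, hy1⟩ := hy
    rw [pdist_gp (abs_le.2 ⟨by linarith, by linarith⟩)]
  rw [MeasureTheory.setIntegral_congr_fun measurableSet_Icc hcongr, shift_eq x F hper]
  rw [intervalIntegral.integral_congr
    (g := fun w => (if gp w ≤ r then (1:ℝ) else 0) * (2*r - gp w)) ?_]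
  · exact K_core hr0 hr
  · intro w _
    simp only [hF, show x + w - x = w by ring]
  
lemma inner_int {r x y : ℝ} (hr : r ≤ 1/4) (hx0 : 0 ≤ x) (hx1 : x ≤ 1)
    (hy0 : 0 ≤ y) (hy1 : y ≤ 1) (hpd : pdist x y ≤ r) :
    ∫ z in Set.Icc (0:ℝ) 1,
      (if pdist x z ≤ r then (1:ℝ) else 0) * (if pdist y z ≤ r then (1:ℝ) else 0)
      = 2*r - pdist x y := by
  set F : ℝ → ℝ := fun z =>
    (if gp (z - x) ≤ r then (1:ℝ) else 0) * (if gp (z - y) ≤ r then (1:ℝ) else 0) with hF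
  have hper : Function.Periodic F 1 := by
    intro z
    simp only [hF, show z + 1 - x = (z - x) + 1 by ring, show z + 1 - y = (z - y) + 1 by ring,
      gp_add_one]
  have hcongr : ∀ z ∈ Set.Icc (0:ℝ) 1,
      (if pdist x z ≤ r then (1:ℝ) else 0) * (if pdist y z ≤ r then (1:ℝ) else 0) = F z := by
    intro z hz
    obtain ⟨hz0, hz1⟩ := hz
    rw [pdist_gp (abs_le.2 ⟨by linarith, by linarith⟩),
      pdist_gp (abs_le.2 ⟨by linarith, by linarith⟩)]
  rw [MeasureTheory.setIntegral_congr_fun measurableSet_Icc hcongr, shift_eq x F hper]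
  have hxy : |y - x| ≤ 1 := abs_le.2 ⟨by linarith, by linarith⟩
  have hJ : (∫ w in (0:ℝ)..1, F (x + w)) = Jr r (y - x) := by
    apply intervalIntegral.integral_congr
    intro w _
    simp only [hF, show x + w - x = w by ring, show x + w - y = w - (y - x) by ring]
  have hpg : pdist x y = gp (y - x) := pdist_gp (abs_le.2 ⟨by linarith, by linarith⟩)
  rw [hJ, J_gp r hxy, ← hpg,
    J_core (pdist_nonneg (by rwa [abs_sub_comm])) hpd hr]

/-- The within-community triangle probability in the geometric block model:
for `0 ≤ r ≤ 1/4` and `x ∈ [0,1]`, the integral over `(y,z) ∈ [0,1]²` of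
`1[d(x,y) ≤ r] · 1[d(x,z) ≤ r] · 1[d(y,z) ≤ r]` equals `3r²`. -/
theorem triangle_prob_same_community (r : ℝ) (hr0 : 0 ≤ r) (hr : r ≤ 1 / 4)
    (x : ℝ) (hx : x ∈ Set.Icc (0 : ℝ) 1) :
    (∫ p in Set.Icc (0 : ℝ) 1 ×ˢ Set.Icc (0 : ℝ) 1,
        (if pdist x p.1 ≤ r then (1 : ℝ) else 0) *
        (if pdist x p.2 ≤ r then (1 : ℝ) else 0) *
        (if pdist p.1 p.2 ≤ r then (1 : ℝ) else 0)) = 3 * r ^ 2 := by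
  obtain ⟨hx0, hx1⟩ := hx
  have hr' : r ≤ 1/4 := hr
  set f : ℝ × ℝ → ℝ := fun p =>
    (if pdist x p.1 ≤ r then (1:ℝ) else 0) * (if pdist x p.2 ≤ r then (1:ℝ) else 0) *
    (if pdist p.1 p.2 ≤ r then (1:ℝ) else 0) with hfd
  have hcont : Continuous (fun p : ℝ × ℝ => pdist p.1 p.2) := by
    unfold pdist
    exact ((continuous_fst.sub continuous_snd).abs).min
      (continuous_const.sub (continuous_fst.sub continuous_snd).abs)
  have m1 : Measurable fun p : ℝ × ℝ => if pdist x p.1 ≤ r then (1:ℝ) else 0 :=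
    Measurable.ite (measurableSet_le
      ((hcont.comp (continuous_const.prodMk continuous_fst)).measurable) measurable_const)
      measurable_const measurable_const
  have m2 : Measurable fun p : ℝ × ℝ => if pdist x p.2 ≤ r then (1:ℝ) else 0 :=
    Measurable.ite (measurableSet_le
      ((hcont.comp (continuous_const.prodMk continuous_snd)).measurable) measurable_const)
      measurable_const measurable_const
  have m3 : Measurable fun p : ℝ × ℝ => if pdist p.1 p.2 ≤ r then (1:ℝ) else 0 :=
    Measurable.ite (measurableSet_le hcont.measurable measurable_const)
      measurable_const measurable_const
  have hm : Measurable f := (m1.mul m2).mul m3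
  have hb : ∀ p, ‖f p‖ ≤ 1 := by
    intro p; simp only [hfd, Real.norm_eq_abs]; split_ifs <;> norm_num
  have hfin : volume (Set.Icc (0:ℝ) 1 ×ˢ Set.Icc (0:ℝ) 1) < ⊤ :=
    (isCompact_Icc.prod isCompact_Icc).measure_lt_top
  have hInt : IntegrableOn f (Set.Icc (0:ℝ) 1 ×ˢ Set.Icc (0:ℝ) 1) volume :=
    (integrableOn_const hfin.ne).mono' hm.aestronglyMeasurable.restrict (ae_of_all _ hb)
  have hInt' : IntegrableOn f (Set.Icc (0:ℝ) 1 ×ˢ Set.Icc (0:ℝ) 1) (volume.prod volume) := by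
    rwa [← MeasureTheory.Measure.volume_eq_prod]
  rw [show (volume : Measure (ℝ × ℝ)) = volume.prod volume from
      MeasureTheory.Measure.volume_eq_prod ℝ ℝ,
    MeasureTheory.setIntegral_prod f hInt']
  have key : ∀ y ∈ Set.Icc (0:ℝ) 1, (∫ z in Set.Icc (0:ℝ) 1, f (y, z))
      = (if pdist x y ≤ r then (1:ℝ) else 0) * (2*r - pdist x y) := by
    intro y hy
    obtain ⟨hy0, hy1⟩ := hy
    have he : ∀ z : ℝ, f (y, z) = (if pdist x y ≤ r then (1:ℝ) else 0) *
        ((if pdist x z ≤ r then (1:ℝ) else 0) * (if pdist y z ≤ r then (1:ℝ) else 0)) := by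
      intro z; simp only [hfd]; ring
    simp_rw [he]
    rw [MeasureTheory.integral_const_mul]
    by_cases hpd : pdist x y ≤ r
    · rw [inner_int hr' hx0 hx1 hy0 hy1 hpd]
    · simp [hpd]
  rw [MeasureTheory.setIntegral_congr_fun measurableSet_Icc key]
  exact outer_int hr0 hr' hx0 hx1
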